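/- Let G be a (2-uniform) graph containing no pseudo sunflower of size three. Then G is a subgraph of a triangle or a subgraph of a 4-cycle. In particular |G| ≤ 4, and every vertex of G has degree at most 2. -/

import Mathlib

/-- The matching number of a hypergraph: the largest size of a set of
pairwise disjoint edges. -/
noncomputable def matchingNumber (H : Finset (Finset ℕ)) : ℕ :=
  sSup {m | ∃ M : Finset (Finset ℕ), M ⊆ H ∧ M.card = m ∧
    (M : Set (Finset ℕ)).PairwiseDisjoint id}

/-- A hypergraph is `t`-resilient if deleting any set of at most `t`
vertices does not decrease its matching number. -/
def Resilient (t : ℕ) (H : Finset (Finset ℕ)) : Prop :=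
  ∀ T : Finset ℕ, T.card ≤ t →
    matchingNumber (H.filter fun F => Disjoint F T) = matchingNumber H

/-- `S 0, …, S (r-1)` form a pseudo sunflower with center `C`:
the `S i` are distinct, `C` is a proper subset of one of them, and the
sets `S i \ C` are pairwise disjoint. -/
def IsPseudoSunflower {r : ℕ} (S : Fin r → Finset ℕ) (C : Finset ℕ) : Prop :=
  Function.Injective S ∧ (∃ i, C ⊂ S i) ∧
    ∀ i j, i ≠ j → Disjoint (S i \ C) (S j \ C)

/-- The covering (transversal) number of a hypergraph. -/
noncomputable def coverNumber (H : Finset (Finset ℕ)) : ℕ :=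
  sInf {m | ∃ Y : Finset ℕ, Y.card = m ∧ ∀ F ∈ H, (F ∩ Y).Nonempty}

lemma pair_of_mem {e : Finset ℕ} (he : e.card = 2) {v : ℕ} (hv : v ∈ e) :
    ∃ b, v ≠ b ∧ e = {v, b} := by
  obtain ⟨x, y, hxy, rfl⟩ := Finset.card_eq_two.mp he
  rcases Finset.mem_insert.mp hv with rfl | hv'
  · exact ⟨y, hxy, rfl⟩
  · rw [Finset.mem_singleton] at hv'
    subst hv'
    exact ⟨x, hxy.symm, Finset.pair_comm x v⟩

lemma eq_pair {e : Finset ℕ} (he : e.card = 2) {v x : ℕ} (hv : v ∈ e) (hx : x ∈ e)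
    (hvx : v ≠ x) : e = {v, x} := by
  refine (Finset.eq_of_subset_of_card_le ?_ ?_).symm
  · exact Finset.insert_subset hv (Finset.singleton_subset_iff.mpr hx)
  · rw [he, Finset.card_pair hvx]

lemma disj_pairs {e1 e2 : Finset ℕ} (h1 : e1.card = 2) (h2 : e2.card = 2) (hne : e1 ≠ e2)
    {v : ℕ} (hv1 : v ∈ e1) (hv2 : v ∈ e2) : Disjoint (e1 \ {v}) (e2 \ {v}) := by
  rw [Finset.disjoint_left]
  intro x hx1 hx2
  rw [Finset.mem_sdiff, Finset.mem_singleton] at hx1 hx2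
  exact hne ((eq_pair h1 hv1 hx1.1 (Ne.symm hx1.2)).trans
    (eq_pair h2 hv2 hx2.1 (Ne.symm hx2.2)).symm)

lemma ssub_singleton {e : Finset ℕ} (he : e.card = 2) {v : ℕ} (hv : v ∈ e) :
    ({v} : Finset ℕ) ⊂ e := by
  refine (Finset.singleton_subset_iff.mpr hv).ssubset_of_ne ?_
  intro h
  rw [← h] at he
  simp at he

lemma core_lemma {G : Finset (Finset ℕ)}
    (hps : ¬ ∃ (S : Fin 3 → Finset ℕ) (C : Finset ℕ),
      (∀ i, S i ∈ G) ∧ IsPseudoSunflower S C) :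
    ∀ e0 ∈ G, ∀ e1 ∈ G, ∀ e2 ∈ G, e0 ≠ e1 → e0 ≠ e2 → e1 ≠ e2 →
      ∀ C : Finset ℕ, C ⊂ e0 → Disjoint (e0 \ C) (e1 \ C) → Disjoint (e0 \ C) (e2 \ C) →
      Disjoint (e1 \ C) (e2 \ C) → False := by
  intro e0 h0 e1 h1 e2 h2 h01 h02 h12 C hC d01 d02 d12
  refine hps ⟨![e0, e1, e2], C, ?_, ?_, ⟨0, by simpa using hC⟩, ?_⟩
  · intro i; fin_cases i <;> simpa
  · intro i j hij
    fin_cases i <;> fin_cases j <;> simp_all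
  · intro i j hij
    fin_cases i <;> fin_cases j <;> simp_all [disjoint_comm]

section Main

variable {G : Finset (Finset ℕ)} (hG : ∀ E ∈ G, E.card = 2)

/-- No three distinct edges share a vertex. -/
lemma three_lemma (hG : ∀ E ∈ G, E.card = 2)
    (hcore : ∀ e0 ∈ G, ∀ e1 ∈ G, ∀ e2 ∈ G, e0 ≠ e1 → e0 ≠ e2 → e1 ≠ e2 →
      ∀ C : Finset ℕ, C ⊂ e0 → Disjoint (e0 \ C) (e1 \ C) → Disjoint (e0 \ C) (e2 \ C) →
      Disjoint (e1 \ C) (e2 \ C) → False) :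
    ∀ f1 ∈ G, ∀ f2 ∈ G, ∀ f3 ∈ G, f1 ≠ f2 → f1 ≠ f3 → f2 ≠ f3 →
      ∀ w, w ∈ f1 → w ∈ f2 → w ∈ f3 → False := by
  intro f1 h1 f2 h2 f3 h3 h12 h13 h23 w hw1 hw2 hw3
  exact hcore f1 h1 f2 h2 f3 h3 h12 h13 h23 {w} (ssub_singleton (hG f1 h1) hw1)
    (disj_pairs (hG f1 h1) (hG f2 h2) h12 hw1 hw2)
    (disj_pairs (hG f1 h1) (hG f3 h3) h13 hw1 hw3)
    (disj_pairs (hG f2 h2) (hG f3 h3) h23 hw2 hw3)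

/-- If two distinct edges share `w`, any other edge avoiding `w` meets one of them. -/
lemma hit_lemma (hG : ∀ E ∈ G, E.card = 2)
    (hcore : ∀ e0 ∈ G, ∀ e1 ∈ G, ∀ e2 ∈ G, e0 ≠ e1 → e0 ≠ e2 → e1 ≠ e2 →
      ∀ C : Finset ℕ, C ⊂ e0 → Disjoint (e0 \ C) (e1 \ C) → Disjoint (e0 \ C) (e2 \ C) →
      Disjoint (e1 \ C) (e2 \ C) → False) :
    ∀ f1 ∈ G, ∀ f2 ∈ G, ∀ e ∈ G, f1 ≠ f2 → e ≠ f1 → e ≠ f2 →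
      ∀ w, w ∈ f1 → w ∈ f2 → w ∉ e → (e ∩ f1).Nonempty ∨ (e ∩ f2).Nonempty := by
  intro f1 h1 f2 h2 e he h12 he1 he2 w hw1 hw2 hwe
  by_contra hcon
  push_neg at hcon
  rw [← Finset.disjoint_iff_inter_eq_empty] at hcon
  obtain ⟨d1, d2⟩ := hcon
  rw [← Finset.disjoint_iff_inter_eq_empty] at d2
  refine hcore f1 h1 f2 h2 e he h12 (Ne.symm he1) (Ne.symm he2) {w}
    (ssub_singleton (hG f1 h1) hw1)
    (disj_pairs (hG f1 h1) (hG f2 h2) h12 hw1 hw2) ?_ ?_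
  · exact Finset.disjoint_of_subset_left (Finset.sdiff_subset) <|
      Finset.disjoint_of_subset_right (Finset.sdiff_subset) d1.symm
  · exact Finset.disjoint_of_subset_left (Finset.sdiff_subset) <|
      Finset.disjoint_of_subset_right (Finset.sdiff_subset) d2.symm

lemma pair_ne_pair {v b c : ℕ} (hvc : c ≠ v) (hbc : c ≠ b) :
    ({v, b} : Finset ℕ) ≠ {v, c} := by
  intro h
  have : c ∈ ({v, b} : Finset ℕ) := by rw [h]; simp
  simp [hvc, hbc] at this

lemma auxA {G : Finset (Finset ℕ)} (hG : ∀ E ∈ G, E.card = 2)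
    (hthree : ∀ f1 ∈ G, ∀ f2 ∈ G, ∀ f3 ∈ G, f1 ≠ f2 → f1 ≠ f3 → f2 ≠ f3 →
      ∀ w, w ∈ f1 → w ∈ f2 → w ∈ f3 → False)
    (hhit : ∀ f1 ∈ G, ∀ f2 ∈ G, ∀ e ∈ G, f1 ≠ f2 → e ≠ f1 → e ≠ f2 →
      ∀ w, w ∈ f1 → w ∈ f2 → w ∉ e → (e ∩ f1).Nonempty ∨ (e ∩ f2).Nonempty)
    (v b c : ℕ) (hvb : v ≠ b) (hvc : v ≠ c) (hbc : b ≠ c)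
    (h1 : ({v, b} : Finset ℕ) ∈ G) (h2 : ({v, c} : Finset ℕ) ∈ G)
    (e3 : Finset ℕ) (h3 : e3 ∈ G) (hne1 : e3 ≠ {v, b}) (hne2 : e3 ≠ {v, c})
    (hb3 : b ∈ e3) :
    (∃ a b c : ℕ, G ⊆ {({a, b} : Finset ℕ), {b, c}, {a, c}}) ∨
      (∃ a b c d : ℕ, G ⊆ {({a, b} : Finset ℕ), {b, c}, {c, d}, {d, a}}) := by
  have h12 : ({v, b} : Finset ℕ) ≠ {v, c} := pair_ne_pair (Ne.symm hvc) (Ne.symm hbc)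
  have hv3 : v ∉ e3 := by
    intro hv
    exact hthree _ h1 _ h2 _ h3 h12 (Ne.symm hne1) (Ne.symm hne2) v (by simp) (by simp) hv
  obtain ⟨d, hbd, rfl⟩ := pair_of_mem (hG _ h3) hb3
  have hvd : v ≠ d := by intro h; subst h; simp at hv3
  -- generic: for e ∈ G other than the three known edges, v ∉ e and (b ∈ e ∨ c ∈ e)
  have hgen : ∀ e ∈ G, e ≠ {v, b} → e ≠ {v, c} → v ∉ e ∧ (b ∈ e ∨ c ∈ e) := by
    intro e he hne1' hne2'
    have hve : v ∉ e := by
      intro hv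
      exact hthree _ h1 _ h2 _ he h12 (Ne.symm hne1') (Ne.symm hne2') v (by simp) (by simp) hv
    refine ⟨hve, ?_⟩
    rcases hhit _ h1 _ h2 _ he h12 hne1' hne2' v (by simp) (by simp) hve with h | h
    · obtain ⟨x, hx⟩ := h
      rw [Finset.mem_inter] at hx
      left
      rcases Finset.mem_insert.mp hx.2 with rfl | hx2
      · exact absurd hx.1 hve
      · rw [Finset.mem_singleton] at hx2; subst hx2; exact hx.1
    · obtain ⟨x, hx⟩ := h
      rw [Finset.mem_inter] at hx
      right
      rcases Finset.mem_insert.mp hx.2 with rfl | hx2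
      · exact absurd hx.1 hve
      · rw [Finset.mem_singleton] at hx2; subst hx2; exact hx.1
  by_cases hdc : d = c
  · -- triangle case: edges {v,b}, {v,c}, {b,c}
    subst hdc
    left
    refine ⟨v, b, d, ?_⟩
    intro e he
    simp only [Finset.mem_insert, Finset.mem_singleton]
    by_cases he1 : e = {v, b}; · tauto
    by_cases he2 : e = {v, d}; · tauto
    by_cases he3 : e = {b, d}; · tauto
    exfalso
    obtain ⟨hve, hbor⟩ := hgen e he he1 he2
    rcases hbor with hbe | hce
    · refine hthree _ h1 _ h3 _ he ?_ (Ne.symm he1) (Ne.symm he3) b (by simp) (by simp) hbe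
      intro h
      have : v ∈ ({b, d} : Finset ℕ) := by rw [← h]; simp
      simp [hvb, hvd] at this
    · refine hthree _ h2 _ h3 _ he ?_ (Ne.symm he2) (Ne.symm he3) d (by simp) (by simp) hce
      intro h
      have : v ∈ ({b, d} : Finset ℕ) := by rw [← h]; simp
      simp [hvb, hvd] at this
  · -- C4 case: edges {v,b}, {v,c}, {b,d} and possibly {c,d}
    right
    refine ⟨b, v, c, d, ?_⟩
    intro e he
    simp only [Finset.mem_insert, Finset.mem_singleton]
    rw [Finset.pair_comm b v, Finset.pair_comm d b]
    by_cases he1 : e = {v, b}; · tauto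
    by_cases he2 : e = {v, c}; · tauto
    by_cases he3 : e = {b, d}; · tauto
    obtain ⟨hve, hbor⟩ := hgen e he he1 he2
    have h13 : ({v, b} : Finset ℕ) ≠ {b, d} := by
      intro h
      have : v ∈ ({b, d} : Finset ℕ) := by rw [← h]; simp
      simp [hvb, hvd] at this
    have hbe : b ∉ e := by
      intro hbe
      exact hthree _ h1 _ h3 _ he h13 (Ne.symm he1) (Ne.symm he3) b (by simp) (by simp) hbe
    have hce : c ∈ e := by tauto
    have hde : d ∈ e := by
      rcases hhit _ h1 _ h3 _ he h13 he1 he3 b (by simp) (by simp) hbe with h | h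
      · exfalso
        obtain ⟨x, hx⟩ := h
        rw [Finset.mem_inter] at hx
        rcases Finset.mem_insert.mp hx.2 with rfl | hx2
        · exact hve hx.1
        · rw [Finset.mem_singleton] at hx2; subst hx2; exact hbe hx.1
      · obtain ⟨x, hx⟩ := h
        rw [Finset.mem_inter] at hx
        rcases Finset.mem_insert.mp hx.2 with rfl | hx2
        · exact absurd hx.1 hbe
        · rw [Finset.mem_singleton] at hx2; subst hx2; exact hx.1
    have : e = {c, d} := eq_pair (hG e he) hce hde (fun h => hdc h.symm)
    tauto

end Main

/-- A graph containing no pseudo sunflower of size three is a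
subgraph of a triangle or of a 4-cycle; in particular it has at most 4 edges
and maximum degree at most 2. -/
theorem stmt4 (G : Finset (Finset ℕ)) (hG : ∀ E ∈ G, E.card = 2)
    (hps : ¬ ∃ (S : Fin 3 → Finset ℕ) (C : Finset ℕ),
      (∀ i, S i ∈ G) ∧ IsPseudoSunflower S C) :
    ((∃ a b c : ℕ, G ⊆ {({a, b} : Finset ℕ), {b, c}, {a, c}}) ∨
      (∃ a b c d : ℕ, G ⊆ {({a, b} : Finset ℕ), {b, c}, {c, d}, {d, a}})) ∧
    G.card ≤ 4 ∧ (∀ v : ℕ, (G.filter fun E => v ∈ E).card ≤ 2) := by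
  have hcore := core_lemma hps
  have hthree := three_lemma hG hcore
  have hhit := hit_lemma hG hcore
  have hdeg : ∀ v : ℕ, (G.filter fun E => v ∈ E).card ≤ 2 := by
    intro v
    by_contra hc
    push_neg at hc
    obtain ⟨f1, hf1, f2, hf2, f3, hf3, h12, h13, h23⟩ := Finset.two_lt_card.mp hc
    rw [Finset.mem_filter] at hf1 hf2 hf3
    exact hthree _ hf1.1 _ hf2.1 _ hf3.1 h12 h13 h23 v hf1.2 hf2.2 hf3.2
  have hmain : (∃ a b c : ℕ, G ⊆ {({a, b} : Finset ℕ), {b, c}, {a, c}}) ∨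
      (∃ a b c d : ℕ, G ⊆ {({a, b} : Finset ℕ), {b, c}, {c, d}, {d, a}}) := by
    by_cases hpair : ∃ e1 ∈ G, ∃ e2 ∈ G, e1 ≠ e2 ∧ (e1 ∩ e2).Nonempty
    · obtain ⟨e1, he1, e2, he2, hne, v, hv⟩ := hpair
      rw [Finset.mem_inter] at hv
      obtain ⟨b, hvb, rfl⟩ := pair_of_mem (hG _ he1) hv.1
      obtain ⟨c, hvc, rfl⟩ := pair_of_mem (hG _ he2) hv.2
      have hbc : b ≠ c := by
        intro h; subst h; exact hne rfl
      by_cases h3 : ∃ e3 ∈ G, e3 ≠ {v, b} ∧ e3 ≠ {v, c}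
      · obtain ⟨e3, he3, hne1, hne2⟩ := h3
        have hv3 : v ∉ e3 := fun hv3 =>
          hthree _ he1 _ he2 _ he3 hne (Ne.symm hne1) (Ne.symm hne2) v (by simp) (by simp) hv3
        have hbor : b ∈ e3 ∨ c ∈ e3 := by
          rcases hhit _ he1 _ he2 _ he3 hne hne1 hne2 v (by simp) (by simp) hv3 with h | h
          · obtain ⟨x, hx⟩ := h
            rw [Finset.mem_inter] at hx
            left
            rcases Finset.mem_insert.mp hx.2 with rfl | hx2
            · exact absurd hx.1 hv3
            · rw [Finset.mem_singleton] at hx2; subst hx2; exact hx.1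
          · obtain ⟨x, hx⟩ := h
            rw [Finset.mem_inter] at hx
            right
            rcases Finset.mem_insert.mp hx.2 with rfl | hx2
            · exact absurd hx.1 hv3
            · rw [Finset.mem_singleton] at hx2; subst hx2; exact hx.1
        rcases hbor with hb3 | hc3
        · exact auxA hG hthree hhit v b c hvb hvc hbc he1 he2 e3 he3 hne1 hne2 hb3
        · exact auxA hG hthree hhit v c b hvc hvb (Ne.symm hbc) he2 he1 e3 he3 hne2 hne1 hc3
      · push_neg at h3
        left
        refine ⟨v, b, c, ?_⟩
        intro e he
        simp only [Finset.mem_insert, Finset.mem_singleton]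
        by_cases he1' : e = {v, b}; · tauto
        by_cases he2' : e = {v, c}; · tauto
        exact absurd (h3 e he he1') (by simpa using he2')
    · push_neg at hpair
      have hdisj : ∀ e1 ∈ G, ∀ e2 ∈ G, e1 ≠ e2 → Disjoint e1 e2 := by
        intro e1 he1 e2 he2 hne
        rw [Finset.disjoint_iff_inter_eq_empty, ← Finset.not_nonempty_iff_eq_empty]
        exact Finset.not_nonempty_iff_eq_empty.mpr (hpair e1 he1 e2 he2 hne)
      have hcard2 : G.card ≤ 2 := by
        by_contra hc
        push_neg at hc
        obtain ⟨f1, hf1, f2, hf2, f3, hf3, h12, h13, h23⟩ := Finset.two_lt_card.mp hc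
        have hne1 : f1.Nonempty := Finset.card_pos.mp (by rw [hG f1 hf1]; norm_num)
        refine hcore f1 hf1 f2 hf2 f3 hf3 h12 h13 h23 ∅
          (Finset.empty_ssubset.mpr hne1) ?_ ?_ ?_ <;>
          simp only [Finset.sdiff_empty]
        · exact hdisj f1 hf1 f2 hf2 h12
        · exact hdisj f1 hf1 f3 hf3 h13
        · exact hdisj f2 hf2 f3 hf3 h23
      interval_cases h : G.card
      · -- card 0
        rw [Finset.card_eq_zero] at h
        subst h
        exact Or.inl ⟨0, 0, 0, by simp⟩
      · -- card 1
        rw [Finset.card_eq_one] at h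
        obtain ⟨e, rfl⟩ := h
        obtain ⟨x, y, hxy, rfl⟩ := Finset.card_eq_two.mp (hG e (by simp))
        exact Or.inl ⟨x, y, y, by simp⟩
      · -- card 2
        rw [Finset.card_eq_two] at h
        obtain ⟨e1, e2, hne, rfl⟩ := h
        obtain ⟨x, y, hxy, rfl⟩ := Finset.card_eq_two.mp (hG e1 (by simp))
        obtain ⟨z, w, hzw, rfl⟩ := Finset.card_eq_two.mp (hG e2 (by simp))
        refine Or.inr ⟨x, y, z, w, ?_⟩
        intro e he
        simp only [Finset.mem_insert, Finset.mem_singleton] at he ⊢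
        tauto
  refine ⟨hmain, ?_, hdeg⟩
  rcases hmain with ⟨a, b, c, hsub⟩ | ⟨a, b, c, d, hsub⟩
  · calc G.card ≤ _ := Finset.card_le_card hsub
      _ ≤ _ := Finset.card_insert_le _ _
      _ ≤ 3 := Nat.succ_le_succ ((Finset.card_insert_le _ _).trans
          (Nat.succ_le_succ (le_of_eq (Finset.card_singleton _))))
      _ ≤ 4 := by norm_num
  · calc G.card ≤ _ := Finset.card_le_card hsub
      _ ≤ _ := Finset.card_insert_le _ _
      _ ≤ 4 := Nat.succ_le_succ ((Finset.card_insert_le _ _).trans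
          (Nat.succ_le_succ ((Finset.card_insert_le _ _).trans
            (Nat.succ_le_succ (le_of_eq (Finset.card_singleton _))))))
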